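/- Under assumption (★), let (R, μ) satisfy the pre-processing conditions. Then G has a stable matching if and only if there does not exist a critical hospital with respect to (R, μ); moreover, in that case μ itself is a stable matching in G. -/
import Mathlib


open Classical

variable {D H : Type}

def edgesD (E : Set (D × H)) (d : D) : Set (D × H) := {e ∈ E | e.1 = d}

def edgesH (E : Set (D × H)) (h : H) : Set (D × H) := {e ∈ E | e.2 = h}

def optD (E : Set (D × H)) (d : D) : Set (Option (D × H)) :=
  insert none (some '' edgesD E d)

def optH (E : Set (D × H)) (h : H) : Set (Option (D × H)) :=
  insert none (some '' edgesH E h)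

/-- An instance of the strongly stable matching problem with closures:
a bipartite graph between doctors `D` and hospitals `H` with edge set `E`,
a set `S` of closable hospitals, and for each vertex a transitive, total
preference relation on its incident edges together with `∅` (modelled by
`Option`, where `none` plays the role of `∅`), such that every incident
edge is strictly preferred to `∅`. -/
structure SSMC (D H : Type) where
  E : Set (D × H)
  S : Set H
  prefD : D → Option (D × H) → Option (D × H) → Prop
  prefH : H → Option (D × H) → Option (D × H) → Prop
  prefD_trans : ∀ d, ∀ e ∈ optD E d, ∀ f ∈ optD E d, ∀ g ∈ optD E d,
    prefD d e f → prefD d f g → prefD d e g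
  prefD_total : ∀ d, ∀ e ∈ optD E d, ∀ f ∈ optD E d, prefD d e f ∨ prefD d f e
  prefD_none : ∀ d, ∀ e ∈ edgesD E d, prefD d (some e) none ∧ ¬ prefD d none (some e)
  prefH_trans : ∀ h, ∀ e ∈ optH E h, ∀ f ∈ optH E h, ∀ g ∈ optH E h,
    prefH h e f → prefH h f g → prefH h e g
  prefH_total : ∀ h, ∀ e ∈ optH E h, ∀ f ∈ optH E h, prefH h e f ∨ prefH h f e
  prefH_none : ∀ h, ∀ e ∈ edgesH E h, prefH h (some e) none ∧ ¬ prefH h none (some e)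

namespace SSMC

variable (I : SSMC D H)

/-- `e ≻_d f` -/
def strictD (d : D) (e f : Option (D × H)) : Prop := I.prefD d e f ∧ ¬ I.prefD d f e

/-- `e ∼_d f` -/
def simD (d : D) (e f : Option (D × H)) : Prop := I.prefD d e f ∧ I.prefD d f e

/-- `e ≻_h f` -/
def strictH (h : H) (e f : Option (D × H)) : Prop := I.prefH h e f ∧ ¬ I.prefH h f e

/-- `e ∼_h f` -/
def simH (h : H) (e f : Option (D × H)) : Prop := I.prefH h e f ∧ I.prefH h f e

/-- A matching: a subset of `E` with at most one edge at each vertex. -/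
def isMatching (μ : Set (D × H)) : Prop :=
  μ ⊆ I.E ∧ (∀ e ∈ μ, ∀ f ∈ μ, e.1 = f.1 → e = f) ∧
    (∀ e ∈ μ, ∀ f ∈ μ, e.2 = f.2 → e = f)

end SSMC

/-- `μ(d)`: the edge of `μ` at doctor `d` (or `none`). -/
noncomputable def muD (μ : Set (D × H)) (d : D) : Option (D × H) :=
  if h : ∃ e, e ∈ μ ∧ e.1 = d then some h.choose else none

/-- `μ(h)`: the edge of `μ` at hospital `h` (or `none`). -/
noncomputable def muH (μ : Set (D × H)) (h : H) : Option (D × H) :=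
  if hh : ∃ e, e ∈ μ ∧ e.2 = h then some hh.choose else none

namespace SSMC

variable (I : SSMC D H)

/-- `e` blocks the matching `μ`: `e ∈ E \ μ`, `e` weakly blocks `μ` on both of its
endpoints and strongly blocks `μ` on at least one of them (where blocking on a
hospital `h ∈ S` additionally requires `μ(h) ≠ ∅`). -/
def blocks (μ : Set (D × H)) (e : D × H) : Prop :=
  e ∈ I.E ∧ e ∉ μ ∧
  I.prefD e.1 (some e) (muD μ e.1) ∧
  (I.prefH e.2 (some e) (muH μ e.2) ∧ (e.2 ∈ I.S → muH μ e.2 ≠ none)) ∧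
  (I.strictD e.1 (some e) (muD μ e.1) ∨
    (I.strictH e.2 (some e) (muH μ e.2) ∧ (e.2 ∈ I.S → muH μ e.2 ≠ none)))

/-- A stable matching: no edge blocks it. -/
def stable (μ : Set (D × H)) : Prop :=
  I.isMatching μ ∧ ∀ e, ¬ I.blocks μ e

/-- `Ch_D(F)`: union over doctors `d` of the most preferred edges of `F(d)`. -/
def ChD (F : Set (D × H)) : Set (D × H) :=
  {e ∈ F | ∀ f ∈ F, f.1 = e.1 → I.prefD e.1 (some e) (some f)}

/-- `Ch_H(F)`: union over hospitals `h` of the most preferred edges of `F(h)`. -/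
def ChH (F : Set (D × H)) : Set (D × H) :=
  {e ∈ F | ∀ f ∈ F, f.2 = e.2 → I.prefH e.2 (some e) (some f)}

/-- `Ch(F) = Ch_H(Ch_D(F))`. -/
def Ch (F : Set (D × H)) : Set (D × H) := I.ChH (I.ChD F)

/-- `e ≻_d F` for a flat set `F`. -/
def dSucc (F : Set (D × H)) (e : D × H) : Prop :=
  (∀ f ∈ F, f.1 ≠ e.1) ∨ ∃ f ∈ F, f.1 = e.1 ∧ I.strictD e.1 (some e) (some f)

/-- `e ∼_d F` for a flat set `F`. -/
def dSim (F : Set (D × H)) (e : D × H) : Prop :=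
  ∃ f ∈ F, f.1 = e.1 ∧ I.simD e.1 (some e) (some f)

/-- `block(F)` for a flat set `F ⊆ E`. -/
def setBlock (F : Set (D × H)) : Set (D × H) :=
  {e | e ∈ I.E ∧ e ∉ F ∧ (∃ f ∈ F, f.2 = e.2) ∧
    (I.dSucc F e ∨ I.dSim F e) ∧
    (I.dSucc F e → ∃ f ∈ F, f.2 = e.2 ∧ I.prefH e.2 (some e) (some f)) ∧
    (I.dSim F e → ∃ f ∈ F, f.2 = e.2 ∧ I.strictH e.2 (some e) (some f))}

/-- `L = Ch(E \ R)`. -/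
def Lset (R : Set (D × H)) : Set (D × H) := I.Ch (I.E \ R)

/-- The pre-processing conditions (R1)–(R5) on a pair `(R, μ)`. -/
def preproc (R μ : Set (D × H)) : Prop :=
  R ⊆ I.E ∧ I.isMatching μ ∧
  -- (R1)
  (∀ σ, I.stable σ → ∀ e ∈ R, e ∉ σ) ∧
  -- (R2)
  μ ⊆ I.Ch (I.E \ R) ∧
  -- (R3)
  (∀ d : D, (∃ e ∈ I.E \ R, e.1 = d) → ∃ e ∈ μ, e.1 = d) ∧
  -- (R4)
  R ∩ I.setBlock (I.Ch (I.E \ R)) = ∅ ∧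
  -- (R5)
  (∀ d : D, ∀ e ∈ R, e.1 = d → ∀ f ∈ I.E \ R, f.1 = d → I.prefD d (some e) (some f))

/-- `h` is a critical hospital with respect to `(R, μ)`. -/
def critical (R μ : Set (D × H)) (h : H) : Prop :=
  h ∉ I.S ∧ (∀ e ∈ μ, e.2 ≠ h) ∧
  ((∃ e ∈ I.Ch (I.E \ R), e.2 = h) ∨ (∃ e ∈ R, e.2 = h))

/-- Assumption (★): every doctor strictly prefers any acceptable hospital
outside `S` to any acceptable hospital in `S`. -/
def starAssumption : Prop :=
  ∀ (d : D) (h h' : H), (d, h) ∈ I.E → (d, h') ∈ I.E → h ∈ I.S → h' ∉ I.S →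
    I.strictD d (some (d, h')) (some (d, h))

end SSMC


section Aux

variable {D H : Type}

lemma muD_eq_some {σ : Set (D × H)} (huniq : ∀ e ∈ σ, ∀ f ∈ σ, e.1 = f.1 → e = f)
    {x : D × H} (hx : x ∈ σ) : muD σ x.1 = some x := by
  have hex : ∃ e, e ∈ σ ∧ e.1 = x.1 := ⟨x, hx, rfl⟩
  rw [muD, dif_pos hex]
  exact congrArg some (huniq _ hex.choose_spec.1 _ hx hex.choose_spec.2)

lemma muD_eq_none {σ : Set (D × H)} {d : D} (h : ¬ ∃ e, e ∈ σ ∧ e.1 = d) :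
    muD σ d = none := dif_neg h

lemma muH_eq_some {σ : Set (D × H)} (huniq : ∀ e ∈ σ, ∀ f ∈ σ, e.2 = f.2 → e = f)
    {x : D × H} (hx : x ∈ σ) : muH σ x.2 = some x := by
  have hex : ∃ e, e ∈ σ ∧ e.2 = x.2 := ⟨x, hx, rfl⟩
  rw [muH, dif_pos hex]
  exact congrArg some (huniq _ hex.choose_spec.1 _ hx hex.choose_spec.2)

lemma muH_eq_none {σ : Set (D × H)} {h : H} (hne : ¬ ∃ e, e ∈ σ ∧ e.2 = h) :
    muH σ h = none := dif_neg hne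

namespace SSMC

variable (I : SSMC D H)

lemma someD_mem {e : D × H} (he : e ∈ I.E) : some e ∈ optD I.E e.1 :=
  Set.mem_insert_iff.mpr (Or.inr ⟨e, ⟨he, rfl⟩, rfl⟩)

lemma someH_mem {e : D × H} (he : e ∈ I.E) : some e ∈ optH I.E e.2 :=
  Set.mem_insert_iff.mpr (Or.inr ⟨e, ⟨he, rfl⟩, rfl⟩)

lemma ChD_subset (F : Set (D × H)) : I.ChD F ⊆ F := fun _ he => he.1

lemma ChH_subset (F : Set (D × H)) : I.ChH F ⊆ F := fun _ he => he.1

lemma Ch_subset (F : Set (D × H)) : I.Ch F ⊆ F :=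
  fun e he => I.ChD_subset F (I.ChH_subset _ he)

lemma prefD_refl {d : D} {e : Option (D × H)} (he : e ∈ optD I.E d) : I.prefD d e e :=
  (I.prefD_total d e he e he).elim id id

lemma prefH_refl {h : H} {e : Option (D × H)} (he : e ∈ optH I.E h) : I.prefH h e e :=
  (I.prefH_total h e he e he).elim id id

lemma someH_mem' {e : D × H} {h : H} (he : e ∈ I.E) (h2 : e.2 = h) :
    some e ∈ optH I.E h := by subst h2; exact I.someH_mem he

lemma someD_mem' {e : D × H} {d : D} (he : e ∈ I.E) (h1 : e.1 = d) :
    some e ∈ optD I.E d := by subst h1; exact I.someD_mem he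

/-- existence of a `prefH`-maximum in a finite nonempty set of edges at `h`. -/
lemma exists_prefH_max (h : H) (F : Set (D × H)) [Fintype D] [Fintype H]
    (hFE : ∀ e ∈ F, e ∈ I.E ∧ e.2 = h) (hne : F.Nonempty) :
    ∃ m ∈ F, ∀ f ∈ F, I.prefH h (some m) (some f) := by
  classical
  have hfin : F.Finite := Set.toFinite F
  obtain ⟨s, rfl⟩ : ∃ s : Finset (D × H), (s : Set (D × H)) = F := ⟨hfin.toFinset, hfin.coe_toFinset⟩
  clear hfin
  induction s using Finset.induction with
  | empty => simp at hne
  | @insert a s ha ih =>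
    have haE : a ∈ I.E ∧ a.2 = h := hFE a (by simp)
    have haa : some a ∈ optH I.E h := I.someH_mem' haE.1 haE.2
    by_cases hs : s.Nonempty
    · have hFE' : ∀ e ∈ (s : Set (D × H)), e ∈ I.E ∧ e.2 = h := by
        intro e hes; exact hFE e (by simp [hes])
      obtain ⟨m, hm, hmax⟩ := ih hFE' hs
      have hmE := hFE' m hm
      have hma : some m ∈ optH I.E h := I.someH_mem' hmE.1 hmE.2
      rcases I.prefH_total h (some m) hma (some a) haa with hp | hp
      · refine ⟨m, by simp [hm], ?_⟩
        intro f hf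
        rcases (by simpa using hf : f = a ∨ f ∈ s) with hfa | hfs
        · subst hfa; exact hp
        · exact hmax f hfs
      · refine ⟨a, by simp, ?_⟩
        intro f hf
        rcases (by simpa using hf : f = a ∨ f ∈ s) with hfa | hfs
        · subst hfa; exact I.prefH_refl haa
        · have hfE := hFE' f hfs
          have hfa : some f ∈ optH I.E h := I.someH_mem' hfE.1 hfE.2
          exact I.prefH_trans h (some a) haa (some m) hma (some f) hfa hp (hmax f hfs)
    · refine ⟨a, by simp, ?_⟩
      intro f hf
      rcases (by simpa using hf : f = a ∨ f ∈ s) with hfa | hfs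
      · subst hfa; exact I.prefH_refl haa
      · exact absurd ⟨f, hfs⟩ hs


lemma partA [Fintype D] [Fintype H]
    (R μ : Set (D × H)) (hpre : I.preproc R μ)
    (hnc : ¬ ∃ h : H, I.critical R μ h) : I.stable μ := by
  obtain ⟨hRE, hμm, hR1, hR2, hR3, hR4, hR5⟩ := hpre
  obtain ⟨hμE, hμd, hμh⟩ := hμm
  refine ⟨⟨hμE, hμd, hμh⟩, fun e hb => ?_⟩
  obtain ⟨heE, heμ, hbd, ⟨hbh, hbhS⟩, hstrict⟩ := hb
  have hLER : I.Ch (I.E \ R) ⊆ I.E \ R := I.Ch_subset _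
  have hLChD : I.Ch (I.E \ R) ⊆ I.ChD (I.E \ R) := I.ChH_subset _
  have hoe : some e ∈ optD I.E e.1 := I.someD_mem heE
  by_cases heR : e ∈ R
  · -- case e ∈ R
    by_cases hexh : ∃ f, f ∈ μ ∧ f.2 = e.2
    · obtain ⟨m, hmμ, hm2⟩ := hexh
      have hmuH : muH μ e.2 = some m := hm2 ▸ muH_eq_some hμh hmμ
      rw [hmuH] at hbh
      have hmL : m ∈ I.Ch (I.E \ R) := hR2 hmμ
      have heBlock : e ∈ I.setBlock (I.Ch (I.E \ R)) := by
        refine ⟨heE, fun hL => (hLER hL).2 heR, ⟨m, hmL, hm2⟩, ?_⟩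
        by_cases hfd : ∃ f, f ∈ I.Ch (I.E \ R) ∧ f.1 = e.1
        · obtain ⟨f₀, hf₀L, hf01⟩ := hfd
          have hEf₀ : f₀ ∈ I.E \ R := hLER hf₀L
          have hof₀ : some f₀ ∈ optD I.E e.1 := I.someD_mem' hEf₀.1 hf01
          have hpef₀ : I.prefD e.1 (some e) (some f₀) :=
            hR5 e.1 e heR rfl f₀ hEf₀ hf01
          obtain ⟨g, hgμ, hg1⟩ := hR3 e.1 ⟨f₀, hEf₀, hf01⟩
          have hgL : g ∈ I.Ch (I.E \ R) := hR2 hgμ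
          have hgChD : g ∈ I.ChD (I.E \ R) := hLChD hgL
          have hog : some g ∈ optD I.E e.1 := I.someD_mem' (hLER hgL).1 hg1
          have hmuD : muD μ e.1 = some g := hg1 ▸ muD_eq_some hμd hgμ
          by_cases hpf : I.prefD e.1 (some f₀) (some e)
          · -- e ∼_d L
            have hsim : I.dSim (I.Ch (I.E \ R)) e := ⟨f₀, hf₀L, hf01, hpef₀, hpf⟩
            have hge : I.prefD e.1 (some g) (some e) := by
              have hgf₀ : I.prefD e.1 (some g) (some f₀) := by
                have := hgChD.2 f₀ hEf₀ (hf01.trans hg1.symm)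
                rwa [hg1] at this
              exact I.prefD_trans e.1 (some g) hog (some f₀) hof₀ (some e) hoe hgf₀ hpf
            have hSH : I.strictH e.2 (some e) (some m) := by
              rcases hstrict with hsd | hsh
              · rw [hmuD] at hsd; exact absurd hge hsd.2
              · rw [hmuH] at hsh; exact hsh.1
            exact ⟨Or.inr hsim, fun _ => ⟨m, hmL, hm2, hbh⟩, fun _ => ⟨m, hmL, hm2, hSH⟩⟩
          · -- e ≻_d L
            have hsucc : I.dSucc (I.Ch (I.E \ R)) e := Or.inr ⟨f₀, hf₀L, hf01, hpef₀, hpf⟩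
            refine ⟨Or.inl hsucc, fun _ => ⟨m, hmL, hm2, hbh⟩, fun hsim => ?_⟩
            obtain ⟨f, hfL, hf1, hsimf⟩ := hsim
            have hEf : f ∈ I.E \ R := hLER hfL
            have hof : some f ∈ optD I.E e.1 := I.someD_mem' hEf.1 hf1
            have hf₀f : I.prefD e.1 (some f₀) (some f) := by
              have := (hLChD hf₀L).2 f hEf (hf1.trans hf01.symm)
              rwa [hf01] at this
            exact absurd (I.prefD_trans e.1 (some f₀) hof₀ (some f) hof (some e) hoe
              hf₀f hsimf.2) hpf
        · have hsucc : I.dSucc (I.Ch (I.E \ R)) e :=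
            Or.inl (fun f hf h1 => hfd ⟨f, hf, h1⟩)
          exact ⟨Or.inl hsucc, fun _ => ⟨m, hmL, hm2, hbh⟩,
            fun ⟨f, hf, h1, _⟩ => absurd ⟨f, hf, h1⟩ hfd⟩
      exact absurd (Set.mem_inter heR heBlock)
        (by rw [hR4]; exact Set.notMem_empty e)
    · have hmuH : muH μ e.2 = none := muH_eq_none hexh
      have hS : e.2 ∉ I.S := fun hs => hbhS hs hmuH
      exact hnc ⟨e.2, hS, fun f hf h2 => hexh ⟨f, hf, h2⟩, Or.inr ⟨e, heR, rfl⟩⟩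
  · -- case e ∈ E \ R
    have hEe : e ∈ I.E \ R := ⟨heE, heR⟩
    obtain ⟨g, hgμ, hg1⟩ := hR3 e.1 ⟨e, hEe, rfl⟩
    have hgL : g ∈ I.Ch (I.E \ R) := hR2 hgμ
    have hgChD : g ∈ I.ChD (I.E \ R) := hLChD hgL
    have hog : some g ∈ optD I.E e.1 := I.someD_mem' (hLER hgL).1 hg1
    have hmuD : muD μ e.1 = some g := hg1 ▸ muD_eq_some hμd hgμ
    rw [hmuD] at hbd hstrict
    have hge : I.prefD e.1 (some g) (some e) := by
      have := hgChD.2 e hEe hg1.symm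
      rwa [hg1] at this
    have hSH : I.strictH e.2 (some e) (muH μ e.2) ∧ (e.2 ∈ I.S → muH μ e.2 ≠ none) := by
      rcases hstrict with hsd | hsh
      · exact absurd hge hsd.2
      · exact hsh
    have heChD : e ∈ I.ChD (I.E \ R) := by
      refine ⟨hEe, fun f hf h1 => ?_⟩
      have hof : some f ∈ optD I.E e.1 := I.someD_mem' hf.1 h1
      have hgf : I.prefD e.1 (some g) (some f) := by
        have := hgChD.2 f hf (h1.trans hg1.symm)
        rwa [hg1] at this
      exact I.prefD_trans e.1 (some e) hoe (some g) hog (some f) hof hbd hgf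
    by_cases hexh : ∃ f, f ∈ μ ∧ f.2 = e.2
    · obtain ⟨m, hmμ, hm2⟩ := hexh
      have hmuH : muH μ e.2 = some m := hm2 ▸ muH_eq_some hμh hmμ
      rw [hmuH] at hSH
      have hmL : m ∈ I.Ch (I.E \ R) := hR2 hmμ
      have hme : I.prefH e.2 (some m) (some e) := by
        have := hmL.2 e heChD hm2.symm
        rwa [hm2] at this
      exact absurd hme hSH.1.2
    · have hmuH : muH μ e.2 = none := muH_eq_none hexh
      have hS : e.2 ∉ I.S := fun hs => hSH.2 hs hmuH
      obtain ⟨m, hmF, hmax⟩ := I.exists_prefH_max e.2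
        {f ∈ I.ChD (I.E \ R) | f.2 = e.2}
        (fun f hf => ⟨hf.1.1.1, hf.2⟩) ⟨e, heChD, rfl⟩
      have hmL : m ∈ I.Ch (I.E \ R) := by
        refine ⟨hmF.1, fun f hf h2 => ?_⟩
        have := hmax f ⟨hf, h2.trans hmF.2⟩
        rwa [hmF.2]
      exact hnc ⟨e.2, hS, fun f hf h2 => hexh ⟨f, hf, h2⟩, Or.inl ⟨m, hmL, hmF.2⟩⟩


lemma partB [Fintype D] [Fintype H] (hstar : I.starAssumption)
    (R μ : Set (D × H)) (hpre : I.preproc R μ)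
    (σ : Set (D × H)) (hσ : I.stable σ) : ¬ ∃ h : H, I.critical R μ h := by
  rintro ⟨h₀, hS0, hμ0, hcase⟩
  obtain ⟨hRE, hμm, hR1, hR2, hR3, hR4, hR5⟩ := hpre
  obtain ⟨hμE, hμd, hμh⟩ := hμm
  obtain ⟨⟨hσE, hσd, hσh⟩, hσst⟩ := hσ
  have hσR : ∀ x ∈ σ, x ∉ R := fun x hx hxR => hR1 σ ⟨⟨hσE, hσd, hσh⟩, hσst⟩ x hxR hx
  have hσER : ∀ x ∈ σ, x ∈ I.E \ R := fun x hx => ⟨hσE hx, hσR x hx⟩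
  have hLER : I.Ch (I.E \ R) ⊆ I.E \ R := I.Ch_subset _
  have hLChD : I.Ch (I.E \ R) ⊆ I.ChD (I.E \ R) := I.ChH_subset _
  -- weak domination of σ on the doctor side by edges of `ChD (E \ R)` resp. `R`
  have hdomL : ∀ x ∈ I.ChD (I.E \ R), I.prefD x.1 (some x) (muD σ x.1) := by
    intro x hx
    by_cases hex : ∃ y, y ∈ σ ∧ y.1 = x.1
    · obtain ⟨y, hyσ, hy1⟩ := hex
      have hmu : muD σ x.1 = some y := by rw [← hy1]; exact muD_eq_some hσd hyσ
      rw [hmu]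
      exact hx.2 y (hσER y hyσ) hy1
    · rw [muD_eq_none hex]
      exact (I.prefD_none x.1 x ⟨hx.1.1, rfl⟩).1
  have hdomR : ∀ x ∈ R, I.prefD x.1 (some x) (muD σ x.1) := by
    intro x hx
    by_cases hex : ∃ y, y ∈ σ ∧ y.1 = x.1
    · obtain ⟨y, hyσ, hy1⟩ := hex
      have hmu : muD σ x.1 = some y := by rw [← hy1]; exact muD_eq_some hσd hyσ
      rw [hmu]
      exact hR5 x.1 x hx rfl y (hσER y hyσ) hy1
    · rw [muD_eq_none hex]
      exact (I.prefD_none x.1 x ⟨hRE hx, rfl⟩).1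
  -- a hospital outside `S` that is weakly demanded must be matched in σ
  have hmatched : ∀ x : D × H, x ∈ I.E → x.2 ∉ I.S →
      I.prefD x.1 (some x) (muD σ x.1) → ∃ y, y ∈ σ ∧ y.2 = x.2 := by
    intro x hxE hxS hxd
    by_contra hex
    have hmuH : muH σ x.2 = none := muH_eq_none hex
    have hxσ : x ∉ σ := fun hxσ => hex ⟨x, hxσ, rfl⟩
    have hn := I.prefH_none x.2 x ⟨hxE, rfl⟩
    refine hσst x ⟨hxE, hxσ, hxd, ⟨?_, fun hs => absurd hs hxS⟩,
      Or.inr ⟨⟨?_, ?_⟩, fun hs => absurd hs hxS⟩⟩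
    · rw [hmuH]; exact hn.1
    · rw [hmuH]; exact hn.1
    · rw [hmuH]; exact hn.2
  -- h₀ is matched in σ
  have hx0ex : ∃ y, y ∈ σ ∧ y.2 = h₀ := by
    rcases hcase with ⟨e₀, he₀L, he₀2⟩ | ⟨e₀, he₀R, he₀2⟩
    · have := hmatched e₀ (hLER he₀L).1 (fun hs => hS0 (he₀2 ▸ hs))
        (hdomL e₀ (hLChD he₀L))
      rwa [he₀2] at this
    · have := hmatched e₀ (hRE he₀R) (fun hs => hS0 (he₀2 ▸ hs)) (hdomR e₀ he₀R)
      rwa [he₀2] at this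
  obtain ⟨x₀, hx₀σ, hx₀2⟩ := hx0ex
  have hx₀μ : x₀ ∉ μ := fun hm => hμ0 x₀ hm hx₀2
  have hx₀S : x₀.2 ∉ I.S := fun hs => hS0 (hx₀2 ▸ hs)
  -- the step along the alternating path
  have step : ∀ x : D × H, x ∈ σ → x ∉ μ → x.2 ∉ I.S →
      ∃ y, (y ∈ σ ∧ y ∉ μ ∧ y.2 ∉ I.S) ∧ ∃ f ∈ μ, f.1 = x.1 ∧ f.2 = y.2 := by
    intro x hxσ hxμ hxS
    obtain ⟨f, hfμ, hf1⟩ := hR3 x.1 ⟨x, hσER x hxσ, rfl⟩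
    have hfL := hR2 hfμ
    have hfChD := hLChD hfL
    have hfE : f ∈ I.E := (hLER hfL).1
    have hfx : I.prefD f.1 (some f) (some x) := hfChD.2 x (hσER x hxσ) hf1.symm
    have hfnex : f ≠ x := fun h => hxμ (h ▸ hfμ)
    have hfS : f.2 ∉ I.S := by
      intro hfs
      have h1 : ((x.1, f.2) : D × H) = f := by rw [← hf1]
      have hst := hstar x.1 f.2 x.2 (by rw [h1]; exact hfE) (hσE hxσ) hfs hxS
      have h2 : ((x.1, x.2) : D × H) = x := rfl
      rw [h1, h2] at hst
      have hfx' : I.prefD x.1 (some f) (some x) := by rw [← hf1]; exact hfx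
      exact hst.2 hfx'
    have hfσ : f ∉ σ := fun hfσ => hfnex (hσd f hfσ x hxσ hf1)
    obtain ⟨y, hyσ, hy2⟩ := hmatched f hfE hfS (by
      rw [hf1, muD_eq_some hσd hxσ]
      exact hf1 ▸ hfx)
    have hyμ : y ∉ μ := fun hyμ => hfσ ((hμh y hyμ f hfμ hy2) ▸ hyσ)
    exact ⟨y, ⟨hyσ, hyμ, fun hs => hfS (hy2 ▸ hs)⟩, f, hfμ, hf1, hy2.symm⟩
  -- build the infinite sequence
  choose nxt hnxt using fun (x : {p : D × H // p ∈ σ ∧ p ∉ μ ∧ p.2 ∉ I.S}) =>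
    step x.1 x.2.1 x.2.2.1 x.2.2.2
  let seq : ℕ → {p : D × H // p ∈ σ ∧ p ∉ μ ∧ p.2 ∉ I.S} := fun n =>
    Nat.rec ⟨x₀, hx₀σ, hx₀μ, hx₀S⟩ (fun _ p => ⟨nxt p, (hnxt p).1⟩) n
  have hlink : ∀ n, ∃ f ∈ μ, f.1 = (seq n).1.1 ∧ f.2 = (seq (n+1)).1.2 :=
    fun n => (hnxt (seq n)).2
  have hseq0 : (seq 0).1.2 = h₀ := hx₀2
  have hinj : ∀ n m : ℕ, (seq n).1 = (seq m).1 → n = m := by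
    intro n
    induction n with
    | zero =>
      intro m hm
      cases m with
      | zero => rfl
      | succ m =>
        obtain ⟨f, hfμ, hf1, hf2⟩ := hlink m
        exact absurd (by rw [hf2, ← hm]; exact hseq0) (hμ0 f hfμ)
    | succ n ih =>
      intro m hm
      cases m with
      | zero =>
        obtain ⟨f, hfμ, hf1, hf2⟩ := hlink n
        exact absurd (by rw [hf2, hm]; exact hseq0) (hμ0 f hfμ)
      | succ m =>
        obtain ⟨f₁, hf₁μ, hf₁1, hf₁2⟩ := hlink n
        obtain ⟨f₂, hf₂μ, hf₂1, hf₂2⟩ := hlink m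
        have hff : f₁ = f₂ := hμh f₁ hf₁μ f₂ hf₂μ (by rw [hf₁2, hf₂2, hm])
        have hd : (seq n).1.1 = (seq m).1.1 := by rw [← hf₁1, hff, hf₂1]
        have heq : (seq n).1 = (seq m).1 :=
          hσd (seq n).1 (seq n).2.1 (seq m).1 (seq m).2.1 hd
        rw [ih m heq]
  obtain ⟨n, m, hnm, hEq⟩ :=
    Finite.exists_ne_map_eq_of_infinite (fun n => (seq n).1)
  exact hnm (hinj n m hEq)

end SSMC

end Aux

/-- under assumption (★), for a pair `(R, μ)` satisfying the
pre-processing conditions, `G` has a stable matching iff there is no critical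
hospital with respect to `(R, μ)`, in which case `μ` itself is stable. -/
theorem stable_iff_no_critical {D H : Type} [Fintype D] [Fintype H]
    (I : SSMC D H) (hstar : I.starAssumption)
    (R μ : Set (D × H)) (hpre : I.preproc R μ) :
    ((∃ σ : Set (D × H), I.stable σ) ↔ ¬ ∃ h : H, I.critical R μ h) ∧
      ((¬ ∃ h : H, I.critical R μ h) → I.stable μ) := by
  refine ⟨⟨fun hex => ?_, fun hnc => ⟨μ, I.partA R μ hpre hnc⟩⟩,
    fun hnc => I.partA R μ hpre hnc⟩
  obtain ⟨σ, hσ⟩ := hex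
  exact I.partB hstar R μ hpre σ hσ
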